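/- arXiv:2201.00110 — 2 statements merged into one kernel-verified Lean document; each statement's English description precedes it below -/
import Mathlib

section
/- Let X be a compact metric space and f : X → X a homeomorphism such that every point of X is positively recurrent, f is expansive, and f has the pseudo orbit tracing property. Then X is finite. -/
open Filter Topology

/-- The `n`-th iterate (`n ∈ ℤ`) of a homeomorphism `f`, as a map `X → X`. -/
def iterZ {X : Type*} [TopologicalSpace X] (f : X ≃ₜ X) (n : ℤ) : X → X :=
  ⇑(f.toEquiv ^ n)

/-- The ω-limit set of `x`: limits of `f^{nᵢ}(x)` along strictly increasing
sequences `0 < n₁ < n₂ < ⋯`. -/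
def posLimitSet {X : Type*} [TopologicalSpace X] (f : X ≃ₜ X) (x : X) : Set X :=
  {y | ∃ n : ℕ → ℕ, StrictMono n ∧ 0 < n 0 ∧
    Tendsto (fun i => iterZ f (n i) x) atTop (𝓝 y)}

/-- The α-limit set of `x`: limits of `f^{-nᵢ}(x)` along strictly increasing
sequences `0 < n₁ < n₂ < ⋯`. -/
def negLimitSet {X : Type*} [TopologicalSpace X] (f : X ≃ₜ X) (x : X) : Set X :=
  {y | ∃ n : ℕ → ℕ, StrictMono n ∧ 0 < n 0 ∧
    Tendsto (fun i => iterZ f (-(n i : ℤ)) x) atTop (𝓝 y)}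

/-- `x` is recurrent if it is positively or negatively recurrent. -/
def RecurrentPt {X : Type*} [TopologicalSpace X] (f : X ≃ₜ X) (x : X) : Prop :=
  x ∈ posLimitSet f x ∨ x ∈ negLimitSet f x

/-- `f` is expansive with expansivity constant `c`. -/
def ExpansiveWith {X : Type*} [MetricSpace X] (f : X ≃ₜ X) (c : ℝ) : Prop :=
  0 < c ∧ ∀ x y : X, x ≠ y → ∃ n : ℤ, c < dist (iterZ f n x) (iterZ f n y)

/-- `f` is expansive. -/
def Expansive {X : Type*} [MetricSpace X] (f : X ≃ₜ X) : Prop :=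
  ∃ c : ℝ, ExpansiveWith f c

/-- The full orbit `{fⁿ(x) : n ∈ ℤ}` of a point. -/
def fullOrbit {X : Type*} [TopologicalSpace X] (f : X ≃ₜ X) (x : X) : Set X :=
  Set.range fun n : ℤ => iterZ f n x

/-- `E` is a minimal set: nonempty, closed, invariant (`f(E) = E`), with no proper
nonempty closed invariant subset. -/
def IsMinimalSet {X : Type*} [TopologicalSpace X] (f : X ≃ₜ X) (E : Set X) : Prop :=
  E.Nonempty ∧ IsClosed E ∧ f '' E = E ∧
    ∀ E' ⊆ E, E'.Nonempty → IsClosed E' → f '' E' = E' → E' = E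

/-- `x` is almost periodic: the closure of its orbit is a minimal set. -/
def AlmostPeriodicPt {X : Type*} [TopologicalSpace X] (f : X ≃ₜ X) (x : X) : Prop :=
  IsMinimalSet f (closure (fullOrbit f x))

/-- The left shift `σ` on `ℤ → F`, as a homeomorphism. -/
def shiftH (F : Type*) [TopologicalSpace F] : (ℤ → F) ≃ₜ (ℤ → F) where
  toFun x n := x (n + 1)
  invFun x n := x (n - 1)
  left_inv x := by funext n; simp
  right_inv x := by funext n; simp
  continuous_toFun := continuous_pi fun n => continuous_apply (n + 1)
  continuous_invFun := continuous_pi fun n => continuous_apply (n - 1)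

/-- The `n`-th power (`n ∈ ℕ`) of a homeomorphism, as a homeomorphism. -/
def hpow {X : Type*} [TopologicalSpace X] (f : X ≃ₜ X) : ℕ → X ≃ₜ X
  | 0 => Homeomorph.refl X
  | n + 1 => (hpow f n).trans f

/-- The local stable set `W^s_ε(x)`. -/
def localStable {X : Type*} [MetricSpace X] (f : X ≃ₜ X) (ε : ℝ) (x : X) : Set X :=
  {y | ∀ n : ℕ, dist (iterZ f n x) (iterZ f n y) ≤ ε}

/-- The local unstable set `W^u_ε(x)`. -/
def localUnstable {X : Type*} [MetricSpace X] (f : X ≃ₜ X) (ε : ℝ) (x : X) : Set X :=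
  {y | ∀ n : ℕ, dist (iterZ f (-(n : ℤ)) x) (iterZ f (-(n : ℤ)) y) ≤ ε}

/-- The stable set `W^s(x)`. -/
def stableSet {X : Type*} [MetricSpace X] (f : X ≃ₜ X) (x : X) : Set X :=
  {y | Tendsto (fun n : ℕ => dist (iterZ f n x) (iterZ f n y)) atTop (𝓝 0)}

/-- The unstable set `W^u(x)`. -/
def unstableSet {X : Type*} [MetricSpace X] (f : X ≃ₜ X) (x : X) : Set X :=
  {y | Tendsto (fun n : ℕ => dist (iterZ f (-(n : ℤ)) x) (iterZ f (-(n : ℤ)) y)) atTop (𝓝 0)}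

/-- `f` has the pseudo orbit tracing property. -/
def POTP {X : Type*} [MetricSpace X] (f : X ≃ₜ X) : Prop :=
  ∀ ε > (0 : ℝ), ∃ δ > (0 : ℝ), ∀ u : ℤ → X,
    (∀ i : ℤ, dist (f (u i)) (u (i + 1)) < δ) →
    ∃ x : X, ∀ i : ℤ, dist (iterZ f i x) (u i) < ε


section basics
variable {X : Type*} [TopologicalSpace X] (f : X ≃ₜ X)

lemma iterZ_add (a b : ℤ) (x : X) : iterZ f (a + b) x = iterZ f a (iterZ f b x) := by
  simp [iterZ, zpow_add, Equiv.Perm.mul_apply]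

lemma iterZ_zero (x : X) : iterZ f 0 x = x := by simp [iterZ]

lemma iterZ_one (x : X) : iterZ f 1 x = f x := by simp [iterZ]

lemma f_iterZ (k : ℤ) (x : X) : f (iterZ f k x) = iterZ f (k + 1) x := by
  rw [add_comm, iterZ_add, iterZ_one]

lemma continuous_iterZ (n : ℤ) : Continuous (iterZ f n) := by
  induction n using Int.induction_on with
  | zero => exact continuous_id.congr (fun x => (iterZ_zero f x).symm)
  | succ k ih =>
      have : iterZ f (k + 1) = f ∘ iterZ f k := by
        funext x; rw [Function.comp_apply, f_iterZ]
      rw [this]; exact f.continuous.comp ih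
  | pred k ih =>
      have : iterZ f (-k - 1) = f.symm ∘ iterZ f (-k) := by
        funext x
        have : f (iterZ f (-k - 1) x) = iterZ f (-k) x := by
          rw [f_iterZ]; ring_nf
        rw [Function.comp_apply, ← this, Homeomorph.symm_apply_apply]
      rw [this]; exact f.symm.continuous.comp ih

lemma iterZ_fixed {m : ℤ} {q : X} (h : iterZ f m q = q) (k : ℤ) :
    iterZ f (m * k) q = q := by
  have h' : Function.IsFixedPt (⇑(f.toEquiv ^ m)) q := h
  have := h'.perm_zpow k
  simpa [iterZ, zpow_mul, Function.IsFixedPt] using this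
end basics

section step1
variable {X : Type*} [MetricSpace X] (f : X ≃ₜ X)

/-- Step 1: periodic points are dense. -/
lemma periodic_dense {c : ℝ} (hc : ExpansiveWith f c) (hpotp : POTP f)
    (x : X) (hx : x ∈ posLimitSet f x) {ε : ℝ} (hε : 0 < ε) :
    ∃ p : X, (∃ n : ℤ, 1 ≤ n ∧ iterZ f n p = p) ∧ dist p x < ε := by
  obtain ⟨hc0, hexp⟩ := hc
  set ε' : ℝ := min ε (c/3) with hε'def
  have hε'pos : 0 < ε' := lt_min hε (by linarith)
  obtain ⟨δ, hδpos, hδ⟩ := hpotp ε' hε'pos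
  -- get a return time n ≥ 1 with dist (f^n x) x < δ
  obtain ⟨ns, hmono, hns0, htend⟩ := hx
  have : ∀ᶠ i in atTop, dist (iterZ f (ns i) x) x < δ := by
    have := (Metric.tendsto_nhds.mp htend) δ hδpos
    exact this
  obtain ⟨i0, hi0⟩ := this.exists
  set n : ℤ := (ns i0 : ℤ) with hn
  have hn1 : 1 ≤ n := by
    have : 0 < ns i0 := lt_of_lt_of_le hns0 (hmono.le_iff_le.mpr (Nat.zero_le i0))
    omega
  have hn0 : (0:ℤ) < n := by omega
  -- periodic pseudo orbit
  set u : ℤ → X := fun i => iterZ f (i % n) x with hu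
  have hmod_lt : ∀ i : ℤ, i % n < n := fun i => Int.emod_lt_of_pos i hn0
  have hmod_nn : ∀ i : ℤ, 0 ≤ i % n := fun i => Int.emod_nonneg i (by omega)
  have hstep : ∀ i : ℤ, dist (f (u i)) (u (i + 1)) < δ := by
    intro i
    have hfu : f (u i) = iterZ f (i % n + 1) x := f_iterZ f _ x
    have hkey : (i + 1) % n = (i % n + 1) % n := by
      have h1 : (i % n + 1 + n * (i / n)) % n = (i % n + 1) % n :=
        Int.add_mul_emod_self_left (i % n + 1) n (i / n)
      have h2 : i % n + 1 + n * (i / n) = i + 1 := by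
        have := Int.mul_ediv_add_emod i n; linarith
      rw [← h1, h2]
    by_cases hcase : i % n + 1 < n
    · have : (i + 1) % n = i % n + 1 := by
        rw [hkey, Int.emod_eq_of_lt (by have := hmod_nn i; omega) hcase]
      simp only [hu]
      rw [this, hfu]
      simpa using hδpos
    · have heq : i % n + 1 = n := by have := hmod_lt i; have := hmod_nn i; omega
      have : (i + 1) % n = 0 := by rw [hkey, heq, Int.emod_self]
      simp only [hu]
      rw [this, hfu, heq, iterZ_zero]
      exact hi0
  obtain ⟨z, hz⟩ := hδ u hstep
  -- the shifted point traces the same pseudo orbit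
  have huper : ∀ i : ℤ, u (i + n) = u i := by
    intro i
    simp only [hu]
    congr 1
    conv_lhs => rw [show i + n = i + n * 1 by ring, Int.add_mul_emod_self_left]
  have hz' : ∀ i : ℤ, dist (iterZ f i (iterZ f n z)) (u i) < ε' := by
    intro i
    rw [← iterZ_add]
    have := hz (i + n)
    rwa [huper i] at this
  have hper : iterZ f n z = z := by
    by_contra hne
    obtain ⟨m, hm⟩ := hexp _ _ (Ne.symm hne)
    have h1 := hz m
    have h2 := hz' m
    have : dist (iterZ f m z) (iterZ f m (iterZ f n z)) ≤ ε' + ε' :=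
      (dist_triangle _ (u m) _).trans (by
        have := (dist_comm (iterZ f m (iterZ f n z)) (u m)) ▸ h2
        linarith [h1, this])
    have hε'le : ε' ≤ c/3 := min_le_right _ _
    linarith
  refine ⟨z, ⟨n, hn1, hper⟩, ?_⟩
  have := hz 0
  rw [iterZ_zero] at this
  simp only [hu] at this
  rw [Int.zero_emod, iterZ_zero] at this
  exact this.trans_le (min_le_left _ _)
end step1

section step2
variable {X : Type*} [MetricSpace X] [CompactSpace X] (f : X ≃ₜ X)

lemma close_periodic_same_orbit {c : ℝ} (hc : ExpansiveWith f c) (hpotp : POTP f)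
    (hrec : ∀ x : X, x ∈ posLimitSet f x) :
    ∃ δ₀ > (0:ℝ), ∀ p q : X,
      (∃ l : ℤ, 1 ≤ l ∧ iterZ f l p = p) → (∃ m : ℤ, 1 ≤ m ∧ iterZ f m q = q) →
      dist p q < δ₀ → ∃ r : ℤ, p = iterZ f r q := by
  obtain ⟨hc0, hexp⟩ := hc
  have hεpos : (0:ℝ) < c/3 := by linarith
  obtain ⟨δ, hδpos, hδ⟩ := hpotp (c/3) hεpos
  have hfu : UniformContinuous (⇑f) := CompactSpace.uniformContinuous_of_continuous f.continuous
  obtain ⟨η, hηpos, hη⟩ := Metric.uniformContinuous_iff.mp hfu δ hδpos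
  refine ⟨η, hηpos, ?_⟩
  rintro p q ⟨l, hl1, hp⟩ ⟨m, hm1, hq⟩ hpq
  -- heteroclinic pseudo orbit
  set u : ℤ → X := fun i => if i ≤ 0 then iterZ f i p else iterZ f i q with hu
  have hstep : ∀ i : ℤ, dist (f (u i)) (u (i + 1)) < δ := by
    intro i
    rcases lt_trichotomy i 0 with hi | hi | hi
    · have h1 : i ≤ 0 := le_of_lt hi
      have h2 : i + 1 ≤ 0 := by omega
      simp only [hu, if_pos h1, if_pos h2, f_iterZ]
      simpa using hδpos
    · subst hi
      simp only [hu, if_pos le_rfl, if_neg (by omega : ¬ (0:ℤ) + 1 ≤ 0), iterZ_zero,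
        zero_add, iterZ_one]
      exact hη hpq
    · have h1 : ¬ i ≤ 0 := by omega
      have h2 : ¬ i + 1 ≤ 0 := by omega
      simp only [hu, if_neg h1, if_neg h2, f_iterZ]
      simpa using hδpos
  obtain ⟨z, hz⟩ := hδ u hstep
  have hfor : ∀ i : ℤ, 1 ≤ i → dist (iterZ f i z) (iterZ f i q) < c/3 := by
    intro i hi
    have h := hz i
    simp only [hu] at h
    rwa [if_neg (by omega : ¬ i ≤ 0)] at h
  have hback : ∀ i : ℤ, i ≤ 0 → dist (iterZ f i z) (iterZ f i p) < c/3 := by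
    intro i hi
    have h := hz i
    simp only [hu] at h
    rwa [if_pos hi] at h
  -- recurrence of z, pigeonhole on residues mod m
  obtain ⟨ns, hmono, _, htend⟩ := hrec z
  set M : ℕ := m.toNat with hM
  have hM1 : 1 ≤ M := by omega
  have : Finite (Fin M) := inferInstance
  set g : ℕ → Fin M := fun j => ⟨((ns j : ℤ) % m).toNat, by
    have h1 := Int.emod_nonneg (ns j : ℤ) (by omega : m ≠ 0)
    have h2 := Int.emod_lt_of_pos (ns j : ℤ) (by omega : (0:ℤ) < m)
    omega⟩ with hg
  obtain ⟨r0, hfib⟩ := Finite.exists_infinite_fiber g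
  have hT : (g ⁻¹' {r0}).Infinite := Set.infinite_coe_iff.mp hfib
  set r : ℤ := ((r0 : ℕ) : ℤ) with hr
  have hres : ∀ j ∈ g ⁻¹' {r0}, (ns j : ℤ) % m = r := by
    intro j hj
    have : g j = r0 := hj
    have h1 := Int.emod_nonneg (ns j : ℤ) (by omega : m ≠ 0)
    have h2 : ((ns j : ℤ) % m).toNat = (r0 : ℕ) := by
      rw [← this]
    omega
  set w : X := iterZ f r q with hw
  -- z stays c/3-close to the orbit of w for all time
  have hr0le : (0:ℤ) ≤ r := by positivity
  have hrlt : r < m := by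
    have h := r0.isLt
    omega
  have hclose : ∀ i : ℤ, dist (iterZ f i z) (iterZ f i w) ≤ c/3 := by
    intro i
    apply le_of_forall_pos_le_add
    intro γ hγ
    obtain ⟨θ, hθpos, hθ⟩ := Metric.continuous_iff.mp (continuous_iterZ f i) z γ hγ
    obtain ⟨J, hJ⟩ := (Metric.tendsto_atTop.mp htend) θ hθpos
    obtain ⟨j, hjT, hjgt⟩ := hT.exists_gt (max J (1 - i).toNat)
    have hjJ : J ≤ j := le_of_lt (lt_of_le_of_lt (le_max_left _ _) hjgt)
    have hnsj : (1 - i).toNat < ns j := lt_of_lt_of_le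
      (lt_of_le_of_lt (le_max_right _ _) hjgt) (hmono.le_apply)
    have hge1 : 1 ≤ i + (ns j : ℤ) := by omega
    have hqshift : iterZ f (i + (ns j : ℤ)) q = iterZ f i w := by
      have hmod0 : ((ns j : ℤ) - r) % m = 0 := by
        rw [Int.sub_emod, hres j hjT, Int.emod_eq_of_lt hr0le hrlt, sub_self,
          Int.zero_emod]
      obtain ⟨t, ht⟩ : (m : ℤ) ∣ ((ns j : ℤ) - r) := Int.dvd_of_emod_eq_zero hmod0
      have hdecomp : i + (ns j : ℤ) = (i + r) + m * t := by omega
      rw [hdecomp, iterZ_add, iterZ_fixed f hq t, iterZ_add]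
    have hd1 : dist (iterZ f i z) (iterZ f (i + (ns j : ℤ)) z) < γ := by
      have h := hθ _ (hJ j hjJ)
      rw [← iterZ_add] at h
      rwa [dist_comm] at h
    have hd2 : dist (iterZ f (i + (ns j : ℤ)) z) (iterZ f i w) < c/3 := by
      rw [← hqshift]
      exact hfor _ hge1
    calc dist (iterZ f i z) (iterZ f i w)
        ≤ dist (iterZ f i z) (iterZ f (i + (ns j : ℤ)) z)
          + dist (iterZ f (i + (ns j : ℤ)) z) (iterZ f i w) := dist_triangle _ _ _
      _ ≤ c/3 + γ := by linarith
  have hzw : z = w := by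
    by_contra hne
    obtain ⟨i, hi⟩ := hexp _ _ hne
    linarith [hclose i]
  -- z is m-periodic
  have hzper : iterZ f m z = z := by
    rw [hzw, hw, ← iterZ_add, add_comm, iterZ_add, hq]
  -- backward: z stays c/3-close to orbit of p for all time
  have hbackall : ∀ i : ℤ, dist (iterZ f i z) (iterZ f i p) < c/3 := by
    intro i
    set k : ℤ := |i| with hk
    set j0 : ℤ := i - l * m * k with hj0
    have hlm : 1 ≤ l * m := by nlinarith
    have hkk : i ≤ k := le_abs_self i
    have hk0 : 0 ≤ k := abs_nonneg i
    have hj0le : j0 ≤ 0 := by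
      have : k ≤ l * m * k := le_mul_of_one_le_left hk0 hlm
      omega
    have hzi : iterZ f i z = iterZ f j0 z := by
      have : i = j0 + m * (l * k) := by rw [hj0]; ring
      rw [this, iterZ_add, iterZ_fixed f hzper]
    have hpi : iterZ f i p = iterZ f j0 p := by
      have : i = j0 + l * (m * k) := by rw [hj0]; ring
      rw [this, iterZ_add, iterZ_fixed f hp]
    rw [hzi, hpi]
    exact hback j0 hj0le
  have hzp : z = p := by
    by_contra hne
    obtain ⟨i, hi⟩ := hexp _ _ hne
    linarith [hbackall i]
  exact ⟨r, by rw [← hzp, hzw]⟩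
end step2

theorem aux_stmt_4 {X : Type*} [MetricSpace X] [CompactSpace X] (f : X ≃ₜ X)
    (hrec : ∀ x : X, x ∈ posLimitSet f x) (hexp : ∃ c, ExpansiveWith f c)
    (hpotp : POTP f) : Finite X := by
  obtain ⟨c, hc⟩ := hexp
  set S : Set X := {p | ∃ n : ℤ, 1 ≤ n ∧ iterZ f n p = p} with hS
  have hdense : ∀ x : X, x ∈ closure S := by
    intro x
    rw [Metric.mem_closure_iff]
    intro ε hε
    obtain ⟨p, hpper, hpd⟩ := periodic_dense f hc hpotp x (hrec x) hε
    exact ⟨p, hpper, by rwa [dist_comm]⟩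
  have hSfin : S.Finite := by
    by_contra hinf
    replace hinf : S.Infinite := hinf
    obtain ⟨δ₀, hδ₀pos, horb⟩ := close_periodic_same_orbit f hc hpotp hrec
    set e := hinf.natEmbedding with he
    set seq : ℕ → X := fun j => (e j : X) with hseq
    have hseqinj : Function.Injective seq := Subtype.coe_injective.comp e.injective
    have hseqS : ∀ j, seq j ∈ S := fun j => (e j).2
    obtain ⟨y, -, φ, hφ, htend⟩ :=
      IsCompact.tendsto_subseq (x := seq) isCompact_univ (fun n => trivial)
    obtain ⟨J, hJ⟩ := (Metric.tendsto_atTop.mp htend) (δ₀/2) (by linarith)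
    set P : X := seq (φ J) with hP
    obtain ⟨m, hm1, hmP⟩ := hseqS (φ J)
    -- the orbit of P is finite
    set O : Set X := Set.range (fun r : ℤ => iterZ f r P) with hO
    have hOfin : O.Finite := by
      apply Set.Finite.subset ((Set.finite_Icc (0:ℤ) (m-1)).image (fun r => iterZ f r P))
      rintro _ ⟨r, rfl⟩
      refine ⟨r % m, ?_, ?_⟩
      · have h1 := Int.emod_nonneg r (by omega : m ≠ 0)
        have h2 := Int.emod_lt_of_pos r (by omega : (0:ℤ) < m)
        simp only [Set.mem_Icc]
        omega
      · have hrm : r = r % m + m * (r / m) := by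
          have := Int.mul_ediv_add_emod r m; linarith
        show iterZ f (r % m) P = iterZ f r P
        conv_rhs => rw [hrm, iterZ_add, iterZ_fixed f hmP]
    -- infinitely many distinct points in O
    have hmem : ∀ j : ℕ, seq (φ (J + j)) ∈ O := by
      intro j
      have hd : dist (seq (φ (J + j))) P < δ₀ := by
        have h1 := hJ (J + j) (Nat.le_add_right _ _)
        have h2 := hJ J le_rfl
        simp only [Function.comp_apply] at h1 h2
        calc dist (seq (φ (J + j))) P
            ≤ dist (seq (φ (J + j))) y + dist y (seq (φ J)) := dist_triangle _ _ _
          _ < δ₀/2 + δ₀/2 := add_lt_add h1 (by rwa [dist_comm])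
          _ = δ₀ := by ring
      obtain ⟨r, hr⟩ := horb (seq (φ (J + j))) P (hseqS _) ⟨m, hm1, hmP⟩ hd
      exact ⟨r, hr.symm⟩
    have hOinf : O.Infinite := by
      apply Set.infinite_of_injective_forall_mem
        (f := fun j : ℕ => seq (φ (J + j))) ?_ hmem
      intro a b hab
      have := hseqinj hab
      have := hφ.injective this
      omega
    exact hOinf hOfin
  have huniv : (Set.univ : Set X) = S := by
    have h1 : closure S = S := hSfin.isClosed.closure_eq
    ext x
    simp only [Set.mem_univ, true_iff]
    rw [← h1]
    exact hdense x
  rw [← Set.finite_univ_iff]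
  rw [huniv]
  exact hSfin


/-- If a homeomorphism of a compact metric space is pointwise positively
recurrent, expansive, and has the pseudo orbit tracing property, then the space is finite. -/
theorem stmt_4 {X : Type*} [MetricSpace X] [CompactSpace X] (f : X ≃ₜ X)
    (hrec : ∀ x : X, x ∈ posLimitSet f x) (hexp : Expansive f) (hpotp : POTP f) :
    Finite X := by
  exact aux_stmt_4 f hrec hexp hpotp
end

section
/- Let f be an expansive homeomorphism of a compact metric space (X, d) that is not totally disconnected (equivalently, dim(X) > 0). Then there is ε₀ > 0 such that for every ε ∈ (0, ε₀) there is a point a ∈ X with Σ^s_ε(a,d) ∩ ∂B_ε(a,d) ≠ ∅ or Σ^u_ε(a,d) ∩ ∂B_ε(a,d) ≠ ∅, where Σ^s_ε(a,d) (resp. Σ^u_ε(a,d)) denotes the connected component of W^s_ε(a,d) ∩ cl(B_ε(a,d)) (resp. W^u_ε(a,d) ∩ cl(B_ε(a,d))) containing a. -/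
open Filter Topology

section Aux

open Set Metric TopologicalSpace

lemma iterZ_succ {X : Type*} [TopologicalSpace X] (f : X ≃ₜ X) (n : ℤ) (x : X) :
    iterZ f (n + 1) x = f (iterZ f n x) := by
  have h : n + 1 = 1 + n := by ring
  rw [h]
  simp only [iterZ, zpow_add, zpow_one, Equiv.Perm.mul_apply]
  rfl

lemma iterZ_pred {X : Type*} [TopologicalSpace X] (f : X ≃ₜ X) (n : ℤ) (x : X) :
    iterZ f (n - 1) x = f.symm (iterZ f n x) := by
  have h : n - 1 = -1 + n := by ring
  rw [h]
  simp only [iterZ, zpow_add, zpow_neg, zpow_one, Equiv.Perm.mul_apply]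
  rfl

lemma iterZ_cont {X : Type*} [TopologicalSpace X] (f : X ≃ₜ X) (n : ℤ) :
    Continuous (iterZ f n) := by
  induction n using Int.induction_on with
  | zero => simpa [iterZ] using continuous_id
  | succ k ih =>
      have : iterZ f (k + 1) = f ∘ iterZ f k := by funext x; exact iterZ_succ f k x
      rw [this]; exact f.continuous.comp ih
  | pred k ih =>
      have : iterZ f (-k - 1) = f.symm ∘ iterZ f (-k) := by funext x; exact iterZ_pred f (-k) x
      rw [this]; exact f.symm.continuous.comp ih

lemma iterZ_symm {X : Type*} [TopologicalSpace X] (f : X ≃ₜ X) (n : ℤ) :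
    iterZ f.symm n = iterZ f (-n) := by
  funext x
  have : f.symm.toEquiv = (f.toEquiv)⁻¹ := rfl
  simp [iterZ, this, inv_zpow, zpow_neg]

lemma iterZ_add_s13 {X : Type*} [TopologicalSpace X] (f : X ≃ₜ X) (m n : ℤ) (x : X) :
    iterZ f (m + n) x = iterZ f m (iterZ f n x) := by
  simp [iterZ, zpow_add, Equiv.Perm.mul_apply]

lemma iterZ_ucont {X : Type*} [MetricSpace X] [CompactSpace X] (f : X ≃ₜ X) (n : ℤ)
    {ε : ℝ} (hε : 0 < ε) :
    ∃ δ > 0, ∀ u v : X, dist u v < δ → dist (iterZ f n u) (iterZ f n v) < ε := by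
  have h := (CompactSpace.uniformContinuous_of_continuous (iterZ_cont f n))
  rcases Metric.uniformContinuous_iff.1 h ε hε with ⟨δ, hδ, H⟩
  exact ⟨δ, hδ, fun u v h' => H h'⟩

/-- Boundary bumping, ambient version: in a compact T2 preconnected space,
the connected component of `a` in a proper closed set `A` meets `frontier A`. -/
lemma bump0 {Y : Type*} [TopologicalSpace Y] [CompactSpace Y] [T2Space Y]
    [PreconnectedSpace Y] {A : Set Y} (hA : IsClosed A) {a : Y} (ha : a ∈ A)
    (hA' : A ≠ Set.univ) : (connectedComponentIn A a ∩ frontier A).Nonempty := by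
  by_contra hcon
  rw [Set.not_nonempty_iff_eq_empty] at hcon
  haveI : CompactSpace A := isCompact_iff_compactSpace.mp hA.isCompact
  set p : A := ⟨a, ha⟩
  have hcc : connectedComponentIn A a = Subtype.val '' connectedComponent p :=
    connectedComponentIn_eq_image ha
  set D : Set A := Subtype.val ⁻¹' (frontier A) with hD
  have hDc : IsCompact D := (IsClosed.preimage continuous_subtype_val isClosed_frontier).isCompact
  have hiInter : connectedComponent p = ⋂ s : { s : Set A // IsClopen s ∧ p ∈ s }, ↑s :=
    connectedComponent_eq_iInter_isClopen p
  have hdisj : D ⊆ ⋃ s : { s : Set A // IsClopen s ∧ p ∈ s }, (↑s)ᶜ := by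
    intro z hz
    by_contra hz'
    simp only [Set.mem_iUnion, Set.mem_compl_iff, not_exists, not_not] at hz'
    have hz2 : z ∈ connectedComponent p := by
      rw [hiInter]; exact Set.mem_iInter.2 fun s => hz' s
    have : (z : Y) ∈ connectedComponentIn A a ∩ frontier A := by
      refine ⟨hcc ▸ ⟨z, hz2, rfl⟩, hz⟩
    rw [hcon] at this; exact this
  obtain ⟨t, ht⟩ := hDc.elim_finite_subcover (fun s : { s : Set A // IsClopen s ∧ p ∈ s } => (↑s)ᶜ)
    (fun s => s.2.1.1.isOpen_compl) hdisj
  set V : Set A := ⋂ s ∈ t, (s : Set A) with hV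
  have hVclopen : IsClopen V := isClopen_biInter_finset fun s _ => s.2.1
  have hpV : p ∈ V := Set.mem_iInter₂.2 fun s _ => s.2.2
  have hVD : V ∩ D = ∅ := by
    rw [Set.eq_empty_iff_forall_notMem]
    rintro z ⟨hzV, hzD⟩
    rcases Set.mem_iUnion₂.1 (ht hzD) with ⟨s, hs, hz⟩
    exact hz (Set.mem_iInter₂.1 hzV s hs)
  have hVint : Subtype.val '' V ⊆ interior A := by
    rintro _ ⟨z, hz, rfl⟩
    have h1 : (z : Y) ∈ A := z.2
    have h2 : (z : Y) ∉ frontier A := by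
      intro hfr
      have : z ∈ D := hfr
      rw [Set.eq_empty_iff_forall_notMem] at hVD
      exact hVD z ⟨hz, this⟩
    rw [hA.frontier_eq] at h2
    by_contra hint
    exact h2 (Set.mem_diff_of_mem h1 hint)
  obtain ⟨U, hU, hUV⟩ := isOpen_induced_iff.1 hVclopen.2
  have himage : Subtype.val '' V = U ∩ A := by
    rw [← hUV, Subtype.image_preimage_coe]
    exact Set.inter_comm _ _
  have hopen : IsOpen (Subtype.val '' V) := by
    have : Subtype.val '' V = U ∩ interior A := by
      apply Set.Subset.antisymm
      · exact Set.subset_inter (himage ▸ Set.inter_subset_left) hVint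
      · rw [himage]; exact Set.inter_subset_inter_right U interior_subset
    rw [this]; exact hU.inter isOpen_interior
  have hclosed : IsClosed (Subtype.val '' V) :=
    ((hVclopen.1.isCompact).image continuous_subtype_val).isClosed
  have : Subtype.val '' V = ∅ ∨ Subtype.val '' V = Set.univ :=
    isClopen_iff.mp ⟨hclosed, hopen⟩
  rcases this with h | h
  · rw [Set.eq_empty_iff_forall_notMem] at h
    exact h a ⟨p, hpV, rfl⟩
  · apply hA'
    apply Set.eq_univ_of_univ_subset
    rw [← h]
    rintro _ ⟨z, _, rfl⟩
    exact z.2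

/-- Set version of boundary bumping. -/
lemma bump {X : Type*} [TopologicalSpace X] [T2Space X] {K F : Set X}
    (hK : IsCompact K) (hKc : IsPreconnected K) (hF : IsClosed F) {a : X}
    (haK : a ∈ K) (haF : a ∈ F) (hns : ¬ K ⊆ F) :
    ∃ z ∈ connectedComponentIn (K ∩ F) a, z ∈ frontier F := by
  haveI : CompactSpace K := isCompact_iff_compactSpace.mp hK
  haveI : PreconnectedSpace K := Subtype.preconnectedSpace hKc
  set A : Set K := Subtype.val ⁻¹' F with hA
  have hAc : IsClosed A := hF.preimage continuous_subtype_val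
  have hpA : (⟨a, haK⟩ : K) ∈ A := haF
  have hAne : A ≠ Set.univ := by
    intro h
    apply hns
    intro x hx
    have : (⟨x, hx⟩ : K) ∈ A := h ▸ Set.mem_univ _
    exact this
  obtain ⟨z, hz1, hz2⟩ := bump0 hAc hpA hAne
  refine ⟨(z : X), ?_, ?_⟩
  · have hpre : IsPreconnected (Subtype.val '' connectedComponentIn A ⟨a, haK⟩) :=
      isPreconnected_connectedComponentIn.image _ continuous_subtype_val.continuousOn
    have hsub : Subtype.val '' connectedComponentIn A ⟨a, haK⟩ ⊆ K ∩ F := by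
      rintro _ ⟨w, hw, rfl⟩
      exact ⟨w.2, connectedComponentIn_subset A _ hw⟩
    have hmem : a ∈ Subtype.val '' connectedComponentIn A ⟨a, haK⟩ :=
      ⟨⟨a, haK⟩, mem_connectedComponentIn hpA, rfl⟩
    exact hpre.subset_connectedComponentIn hmem hsub ⟨z, hz1, rfl⟩
  · exact Continuous.frontier_preimage_subset continuous_subtype_val F hz2

lemma compIn_compact {X : Type*} [TopologicalSpace X] {S : Set X} (h : IsCompact S)
    (x : X) : IsCompact (connectedComponentIn S x) := by
  by_cases hx : x ∈ S
  · rw [connectedComponentIn_eq_image hx]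
    haveI := isCompact_iff_compactSpace.mp h
    exact (isClosed_connectedComponent.isCompact).image continuous_subtype_val
  · rw [connectedComponentIn_eq_empty hx]; exact isCompact_empty

lemma frontier_closure_subset_of_isOpen {X : Type*} [TopologicalSpace X] {s : Set X}
    (hs : IsOpen s) : frontier (closure s) ⊆ frontier s := by
  rw [hs.frontier_eq]
  intro z hz
  have h1 : z ∈ closure s := by have := hz.1; rwa [closure_closure] at this
  have h2 : z ∉ s := fun h => hz.2 (interior_maximal subset_closure hs h)
  exact ⟨h1, h2⟩

variable {X : Type*} [MetricSpace X] [CompactSpace X]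

lemma hEdist_ne_top (S T : Set X) (hS : S.Nonempty) (hT : T.Nonempty) :
    EMetric.hausdorffEdist S T ≠ ⊤ :=
  Metric.hausdorffEdist_ne_top_of_nonempty_of_bounded hS hT
    (Bornology.IsBounded.subset (isBounded_of_compactSpace) (Set.subset_univ _))
    (Bornology.IsBounded.subset (isBounded_of_compactSpace) (Set.subset_univ _))

/-- A Hausdorff-metric limit of preconnected nonempty compact sets is preconnected. -/
lemma preconn_limit {K : ℕ → NonemptyCompacts X} {L : NonemptyCompacts X}
    (hc : ∀ i, IsPreconnected (K i : Set X))
    (hlim : Tendsto K atTop (𝓝 L)) : IsPreconnected (L : Set X) := by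
  rw [isPreconnected_iff_subset_of_fully_disjoint_closed L.isCompact.isClosed]
  intro a b ha hb hab hdisj
  by_contra hcon
  push_neg at hcon
  obtain ⟨hna, hnb⟩ := hcon
  set A : Set X := (L : Set X) ∩ a with hA
  set B : Set X := (L : Set X) ∩ b with hB
  have hAc : IsCompact A := L.isCompact.inter_right ha
  have hBc : IsCompact B := L.isCompact.inter_right hb
  have hAne : A.Nonempty := by
    rcases Set.not_subset.1 hnb with ⟨x, hx, hx'⟩
    rcases hab hx with h | h
    · exact ⟨x, hx, h⟩
    · exact absurd h hx'
  have hBne : B.Nonempty := by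
    rcases Set.not_subset.1 hna with ⟨x, hx, hx'⟩
    rcases hab hx with h | h
    · exact absurd h hx'
    · exact ⟨x, hx, h⟩
  have hABdisj : Disjoint A B :=
    Set.disjoint_of_subset Set.inter_subset_right Set.inter_subset_right hdisj
  obtain ⟨δ, hδ, hthick⟩ := hABdisj.exists_thickenings hAc hBc.isClosed
  have hLcov : (L : Set X) ⊆ thickening δ A ∪ thickening δ B := by
    intro x hx
    rcases hab hx with h | h
    · exact Or.inl (self_subset_thickening hδ A ⟨hx, h⟩)
    · exact Or.inr (self_subset_thickening hδ B ⟨hx, h⟩)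
  set W : Set X := (thickening δ A ∪ thickening δ B)ᶜ with hW
  have hWc : IsCompact W := IsClosed.isCompact
    ((isOpen_thickening.union isOpen_thickening).isClosed_compl)
  have hWL : Disjoint W (L : Set X) := by
    rw [Set.disjoint_left]
    intro x hx hxL
    exact hx (hLcov hxL)
  obtain ⟨ρ, hρ, hρdisj⟩ := hWL.exists_thickenings hWc L.isCompact.isClosed
  have hconv : ∀ η > (0:ℝ), ∀ᶠ i in atTop, hausdorffDist (K i : Set X) (L : Set X) < η := by
    intro η hη
    have := Metric.tendsto_nhds.1 hlim η hη
    filter_upwards [this] with i hi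
    rwa [NonemptyCompacts.dist_eq] at hi
  set η := min δ ρ with hη
  have hηpos : 0 < η := lt_min hδ hρ
  have hfin : ∀ i, EMetric.hausdorffEdist (K i : Set X) (L : Set X) ≠ ⊤ :=
    fun i => hEdist_ne_top _ _ (K i).nonempty L.nonempty
  obtain ⟨i, hi⟩ := (hconv η hηpos).exists
  have hKcov : (K i : Set X) ⊆ thickening δ A ∪ thickening δ B := by
    intro x hx
    by_contra hxW
    have hxW' : x ∈ W := hxW
    obtain ⟨y, hy, hxy⟩ := exists_dist_lt_of_hausdorffDist_lt hx
      (lt_of_lt_of_le hi (min_le_right _ _)) (hfin i)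
    have h1 : x ∈ thickening ρ W := self_subset_thickening hρ W hxW'
    have h2 : x ∈ thickening ρ (L : Set X) := mem_thickening_iff.2 ⟨y, hy, hxy⟩
    exact Set.disjoint_left.1 hρdisj h1 h2
  obtain ⟨pa, hpa⟩ := hAne
  obtain ⟨pb, hpb⟩ := hBne
  obtain ⟨xa, hxa, hxad⟩ := exists_dist_lt_of_hausdorffDist_lt' (hpa.1)
    (lt_of_lt_of_le hi (min_le_left _ _)) (hfin i)
  obtain ⟨xb, hxb, hxbd⟩ := exists_dist_lt_of_hausdorffDist_lt' (hpb.1)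
    (lt_of_lt_of_le hi (min_le_left _ _)) (hfin i)
  have hxaU : xa ∈ thickening δ A := mem_thickening_iff.2 ⟨pa, hpa, hxad⟩
  have hxbV : xb ∈ thickening δ B := mem_thickening_iff.2 ⟨pb, hpb, hxbd⟩
  obtain ⟨z, hz⟩ := (hc i) (thickening δ A) (thickening δ B) isOpen_thickening
    isOpen_thickening hKcov ⟨xa, hxa, hxaU⟩ ⟨xb, hxb, hxbV⟩
  exact Set.disjoint_left.1 hthick hz.2.1 hz.2.2

/-- A small subcontinuum around `x₀` touching the sphere of radius `r`. -/
lemma small_continuum {C : Set X} (hCc : IsCompact C) (hCp : IsPreconnected C)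
    {x₀ y₀ : X} (hx : x₀ ∈ C) (hy : y₀ ∈ C) {r : ℝ} (hr : 0 < r)
    (hrd : r < dist x₀ y₀) :
    ∃ D : Set X, ∃ z : X, IsCompact D ∧ IsPreconnected D ∧ x₀ ∈ D ∧ z ∈ D ∧
      dist x₀ z = r ∧ D ⊆ closedBall x₀ r := by
  set F := closure (ball x₀ r) with hFdef
  have hF : IsClosed F := isClosed_closure
  have haF : x₀ ∈ F := subset_closure (mem_ball_self hr)
  have hns : ¬ C ⊆ F := by
    intro h
    have : y₀ ∈ closedBall x₀ r := closure_ball_subset_closedBall (h hy)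
    rw [mem_closedBall, dist_comm] at this; linarith
  obtain ⟨z, hz1, hz2⟩ := bump hCc hCp hF hx haF hns
  have hzb : dist x₀ z = r := by
    have h1 : z ∈ closedBall x₀ r := closure_ball_subset_closedBall
      (by have := hz2.1; rwa [hFdef, closure_closure] at this)
    have h2 : z ∉ ball x₀ r := fun h =>
      hz2.2 (interior_maximal subset_closure isOpen_ball h)
    rw [mem_closedBall] at h1; rw [mem_ball] at h2; push_neg at h2
    rw [dist_comm]
    exact le_antisymm h1 h2
  refine ⟨connectedComponentIn (C ∩ F) x₀, z, compIn_compact (hCc.inter_right hF) _,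
    isPreconnected_connectedComponentIn, mem_connectedComponentIn ⟨hx, haF⟩, hz1, hzb, ?_⟩
  intro w hw
  exact closure_ball_subset_closedBall (connectedComponentIn_subset _ _ hw).2

/-- A certificate: a continuum containing two `ε`-separated points whose backward
iterates up to time `M` stay `ε`-close to those of `a`. -/
def Cert (g : X ≃ₜ X) (ε : ℝ) (M : ℕ) : Prop :=
  ∃ a b : X, ∃ K : Set X, IsCompact K ∧ IsPreconnected K ∧ a ∈ K ∧ b ∈ K ∧ ε ≤ dist a b ∧
    ∀ y ∈ K, ∀ k : ℕ, 1 ≤ k → k ≤ M →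
      dist (iterZ g (-(k : ℤ)) a) (iterZ g (-(k : ℤ)) y) ≤ ε

lemma cert_mono {g : X ≃ₜ X} {ε : ℝ} {M M' : ℕ} (h : Cert g ε M') (hle : M ≤ M') :
    Cert g ε M := by
  obtain ⟨a, b, K, h1, h2, h3, h4, h5, h6⟩ := h
  exact ⟨a, b, K, h1, h2, h3, h4, h5, fun y hy k hk1 hk2 => h6 y hy k hk1 (hk2.trans hle)⟩

lemma cert_or (f : X ≃ₜ X) {c : ℝ} (hexp : ExpansiveWith f c)
    {C : Set X} (hCc : IsCompact C) (hCp : IsPreconnected C)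
    {x₀ y₀ : X} (hx : x₀ ∈ C) (hy : y₀ ∈ C) (hxy : x₀ ≠ y₀)
    {ε : ℝ} (hε : 0 < ε) (hεc : ε < c) (M : ℕ) :
    Cert f ε M ∨ Cert f.symm ε M := by
  classical
  -- uniform continuity data for the first M iterates in both directions
  have huc : ∀ k : ℤ, ∃ δ > 0, ∀ u v : X, dist u v < δ →
      dist (iterZ f k u) (iterZ f k v) < ε := fun k => iterZ_ucont f k hε
  choose δf hδf hδf2 using huc
  set T : Finset ℤ := Finset.Icc (-(M : ℤ)) M with hT
  have hTne : T.Nonempty := ⟨0, by simp [hT]⟩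
  set δ : ℝ := T.inf' hTne δf with hδdef
  have hδpos : 0 < δ := (Finset.lt_inf'_iff hTne).2 fun k _ => hδf k
  have hδle : ∀ k ∈ T, δ ≤ δf k := fun k hk => Finset.inf'_le _ hk
  have hd0 : 0 < dist x₀ y₀ := dist_pos.2 hxy
  set r : ℝ := min (δ / 3) (min (ε / 2) (dist x₀ y₀ / 2)) with hrdef
  have hr : 0 < r := by
    apply lt_min (by linarith)
    exact lt_min (by linarith) (by linarith)
  have hrd : r < dist x₀ y₀ := by
    have : r ≤ dist x₀ y₀ / 2 := (min_le_right _ _).trans (min_le_right _ _)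
    linarith
  obtain ⟨D, z, hDc, hDp, hx₀D, hzD, hdist, hDsub⟩ := small_continuum hCc hCp hx hy hr hrd
  have hdiam : ∀ u ∈ D, ∀ v ∈ D, dist u v ≤ 2 * r := by
    intro u hu v hv
    have h1 : dist u x₀ ≤ r := hDsub hu
    have h2 : dist v x₀ ≤ r := hDsub hv
    calc dist u v ≤ dist u x₀ + dist x₀ v := dist_triangle _ _ _
      _ ≤ r + r := by rw [dist_comm x₀ v]; exact add_le_add h1 h2
      _ = 2 * r := by ring
  have hx₀z : x₀ ≠ z := by
    intro h
    rw [h, dist_self] at hdist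
    exact hr.ne hdist
  -- the predicate: time n blows the continuum beyond ε
  set Pz : ℤ → Prop := fun n => ∃ u ∈ D, ∃ v ∈ D,
    ε < dist (iterZ f n u) (iterZ f n v) with hPz
  have hQex : ∃ m : ℕ, Pz m ∨ Pz (-(m : ℤ)) := by
    obtain ⟨n, hn⟩ := hexp.2 x₀ z hx₀z
    refine ⟨n.natAbs, ?_⟩
    rcases Int.natAbs_eq n with h | h
    · left; exact ⟨x₀, hx₀D, z, hzD, by rw [← h]; linarith⟩
    · right; exact ⟨x₀, hx₀D, z, hzD, by rw [← h]; linarith⟩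
  set m := Nat.find hQex with hm
  have hQm := Nat.find_spec hQex
  have hnot : ∀ j : ℤ, j.natAbs < m → ∀ u ∈ D, ∀ v ∈ D,
      dist (iterZ f j u) (iterZ f j v) ≤ ε := by
    intro j hj u hu v hv
    have hmin := Nat.find_min hQex hj
    push_neg at hmin
    by_contra hcon
    push_neg at hcon
    rcases Int.natAbs_eq j with h | h
    · exact hmin.1 ⟨u, hu, v, hv, by rwa [← h]⟩
    · exact hmin.2 ⟨u, hu, v, hv, by rwa [← h]⟩
  have hMm : M < m := by
    by_contra hle
    push_neg at hle
    -- m ≤ M : contradiction with uniform continuity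
    have hsmall : ∀ j : ℤ, j ∈ T → ∀ u ∈ D, ∀ v ∈ D,
        dist (iterZ f j u) (iterZ f j v) < ε := by
      intro j hj u hu v hv
      apply hδf2 j u v
      have h2r : dist u v ≤ 2 * r := hdiam u hu v hv
      have hr3 : r ≤ δ / 3 := min_le_left _ _
      have : dist u v < δ := by linarith
      exact lt_of_lt_of_le this (hδle j hj)
    rcases hQm with h | h
    · obtain ⟨u, hu, v, hv, hd⟩ := h
      have : (m : ℤ) ∈ T := by
        simp only [hT, Finset.mem_Icc]
        constructor <;> omega
      exact absurd hd (not_lt.2 (le_of_lt (hsmall _ this u hu v hv)))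
    · obtain ⟨u, hu, v, hv, hd⟩ := h
      have : (-(m : ℤ)) ∈ T := by
        simp only [hT, Finset.mem_Icc]
        constructor <;> omega
      exact absurd hd (not_lt.2 (le_of_lt (hsmall _ this u hu v hv)))
  rcases hQm with h | h
  · -- forward blow-up : unstable certificate for f
    obtain ⟨u, hu, v, hv, hd⟩ := h
    left
    refine ⟨iterZ f m u, iterZ f m v, iterZ f (m : ℤ) '' D,
      hDc.image (iterZ_cont f _), hDp.image _ (iterZ_cont f _).continuousOn,
      ⟨u, hu, rfl⟩, ⟨v, hv, rfl⟩, le_of_lt hd, ?_⟩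
    rintro y ⟨w, hw, rfl⟩ k hk1 hkM
    rw [← iterZ_add_s13 f (-(k : ℤ)) m u, ← iterZ_add_s13 f (-(k : ℤ)) m w]
    apply hnot _ _ u hu w hw
    omega
  · -- backward blow-up : stable certificate, i.e. unstable for f.symm
    obtain ⟨u, hu, v, hv, hd⟩ := h
    right
    refine ⟨iterZ f (-(m : ℤ)) u, iterZ f (-(m : ℤ)) v, iterZ f (-(m : ℤ)) '' D,
      hDc.image (iterZ_cont f _), hDp.image _ (iterZ_cont f _).continuousOn,
      ⟨u, hu, rfl⟩, ⟨v, hv, rfl⟩, le_of_lt hd, ?_⟩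
    rintro y ⟨w, hw, rfl⟩ k hk1 hkM
    rw [iterZ_symm, neg_neg, ← iterZ_add_s13 f (k : ℤ) (-(m : ℤ)) u,
      ← iterZ_add_s13 f (k : ℤ) (-(m : ℤ)) w]
    apply hnot _ _ u hu w hw
    omega

/-- Limit step: from certificates for all `M`, produce the desired point. -/
lemma limit_step (g : X ≃ₜ X) {ε : ℝ} (hε : 0 < ε)
    (hcert : ∀ M : ℕ, Cert g ε M) :
    ∃ a : X, (connectedComponentIn
        ({y | ∀ n : ℕ, dist (iterZ g (-(n : ℤ)) a) (iterZ g (-(n : ℤ)) y) ≤ ε} ∩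
          closure (ball a ε)) a ∩ frontier (ball a ε)).Nonempty := by
  classical
  choose av bv Kv hKc hKp haK hbK habd hprop using hcert
  set KK : ℕ → NonemptyCompacts X := fun M => ⟨⟨Kv M, hKc M⟩, ⟨av M, haK M⟩⟩ with hKK
  obtain ⟨⟨a, b, L⟩, -, φ, hφ, hconv⟩ :=
    IsCompact.tendsto_subseq (x := fun M => ((av M, bv M, KK M) : X × X × NonemptyCompacts X))
      isCompact_univ (fun n => Set.mem_univ _)
  have hta : Tendsto (fun i => av (φ i)) atTop (𝓝 a) :=
    ((continuous_fst.tendsto _).comp hconv :)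
  have htb : Tendsto (fun i => bv (φ i)) atTop (𝓝 b) :=
    (((continuous_fst.comp continuous_snd).tendsto _).comp hconv :)
  have htK : Tendsto (fun i => KK (φ i)) atTop (𝓝 L) :=
    (((continuous_snd.comp continuous_snd).tendsto _).comp hconv :)
  have hdistH : ∀ η > (0:ℝ), ∀ᶠ i in atTop,
      hausdorffDist (Kv (φ i)) (L : Set X) < η := by
    intro η hη
    have := Metric.tendsto_nhds.1 htK η hη
    filter_upwards [this] with i hi
    rwa [NonemptyCompacts.dist_eq] at hi
  have hfin : ∀ i, EMetric.hausdorffEdist (Kv (φ i) : Set X) (L : Set X) ≠ ⊤ :=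
    fun i => hEdist_ne_top _ _ ⟨av (φ i), haK (φ i)⟩ L.nonempty
  -- a ∈ L
  have haL : a ∈ (L : Set X) := by
    have : a ∈ closure (L : Set X) := by
      rw [Metric.mem_closure_iff]
      intro θ hθ
      have h1 : ∀ᶠ i in atTop, dist (av (φ i)) a < θ / 2 :=
        Metric.tendsto_nhds.1 hta (θ / 2) (by linarith)
      obtain ⟨i, hi1, hi2⟩ := (h1.and (hdistH (θ / 2) (by linarith))).exists
      obtain ⟨y, hy, hyd⟩ := exists_dist_lt_of_hausdorffDist_lt (haK (φ i)) hi2 (hfin i)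
      refine ⟨y, hy, ?_⟩
      calc dist a y ≤ dist a (av (φ i)) + dist (av (φ i)) y := dist_triangle _ _ _
        _ < θ / 2 + θ / 2 := add_lt_add (by rwa [dist_comm]) hyd
        _ = θ := by ring
    rwa [L.isCompact.isClosed.closure_eq] at this
  have hbL : b ∈ (L : Set X) := by
    have : b ∈ closure (L : Set X) := by
      rw [Metric.mem_closure_iff]
      intro θ hθ
      have h1 : ∀ᶠ i in atTop, dist (bv (φ i)) b < θ / 2 :=
        Metric.tendsto_nhds.1 htb (θ / 2) (by linarith)
      obtain ⟨i, hi1, hi2⟩ := (h1.and (hdistH (θ / 2) (by linarith))).exists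
      obtain ⟨y, hy, hyd⟩ := exists_dist_lt_of_hausdorffDist_lt (hbK (φ i)) hi2 (hfin i)
      refine ⟨y, hy, ?_⟩
      calc dist b y ≤ dist b (bv (φ i)) + dist (bv (φ i)) y := dist_triangle _ _ _
        _ < θ / 2 + θ / 2 := add_lt_add (by rwa [dist_comm]) hyd
        _ = θ := by ring
    rwa [L.isCompact.isClosed.closure_eq] at this
  have habL : ε ≤ dist a b :=
    ge_of_tendsto (hta.dist htb) (Eventually.of_forall fun i => habd (φ i))
  have hLp : IsPreconnected (L : Set X) := preconn_limit (fun i => hKp (φ i)) htK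
  -- the key estimate on L
  have hkey : ∀ y ∈ (L : Set X), ∀ k : ℕ, 1 ≤ k →
      dist (iterZ g (-(k : ℤ)) a) (iterZ g (-(k : ℤ)) y) ≤ ε := by
    intro y hy k hk
    apply le_of_forall_pos_le_add
    intro θ hθ
    obtain ⟨δ, hδ, hucδ⟩ := iterZ_ucont g (-(k : ℤ)) (by linarith : (0:ℝ) < θ / 3)
    have h1 : ∀ᶠ i in atTop, dist (av (φ i)) a < δ := Metric.tendsto_nhds.1 hta δ hδ
    obtain ⟨i, ⟨hi1, hi2⟩, hik⟩ := ((h1.and (hdistH δ hδ)).and (eventually_ge_atTop k)).exists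
    obtain ⟨y', hy', hyd⟩ := exists_dist_lt_of_hausdorffDist_lt' hy hi2 (hfin i)
    have hkφ : k ≤ φ i := hik.trans (hφ.le_apply)
    have hmid : dist (iterZ g (-(k : ℤ)) (av (φ i))) (iterZ g (-(k : ℤ)) y') ≤ ε :=
      hprop (φ i) y' hy' k hk hkφ
    have hfirst : dist (iterZ g (-(k : ℤ)) a) (iterZ g (-(k : ℤ)) (av (φ i))) < θ / 3 :=
      hucδ _ _ (by rwa [dist_comm])
    have hlast : dist (iterZ g (-(k : ℤ)) y') (iterZ g (-(k : ℤ)) y) < θ / 3 :=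
      hucδ _ _ (by simpa [dist_comm] using hyd)
    calc dist (iterZ g (-(k : ℤ)) a) (iterZ g (-(k : ℤ)) y)
        ≤ dist (iterZ g (-(k : ℤ)) a) (iterZ g (-(k : ℤ)) (av (φ i))) +
          dist (iterZ g (-(k : ℤ)) (av (φ i))) (iterZ g (-(k : ℤ)) y') +
          dist (iterZ g (-(k : ℤ)) y') (iterZ g (-(k : ℤ)) y) := dist_triangle4 _ _ _ _
      _ ≤ θ / 3 + ε + θ / 3 := by
          exact add_le_add (add_le_add (le_of_lt hfirst) hmid) (le_of_lt hlast)
      _ ≤ ε + θ := by linarith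
  set Wu : Set X :=
    {y | ∀ n : ℕ, dist (iterZ g (-(n : ℤ)) a) (iterZ g (-(n : ℤ)) y) ≤ ε} with hWu
  have hmemWu : ∀ y, dist a y ≤ ε →
      (∀ k : ℕ, 1 ≤ k → dist (iterZ g (-(k : ℤ)) a) (iterZ g (-(k : ℤ)) y) ≤ ε) →
      y ∈ Wu := by
    intro y h0 hk n
    cases n with
    | zero => simpa [iterZ] using h0
    | succ j => exact hk (j + 1) (Nat.succ_le_succ (Nat.zero_le j))
  have hLWu : ∀ y ∈ (L : Set X) ∩ closure (ball a ε), y ∈ Wu := by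
    rintro y ⟨hyL, hycl⟩
    apply hmemWu
    · have := closure_ball_subset_closedBall hycl
      rwa [mem_closedBall, dist_comm] at this
    · exact fun k hk => hkey y hyL k hk
  refine ⟨a, ?_⟩
  by_cases hLsub : (L : Set X) ⊆ closure (ball a ε)
  · -- then all of L is the component; b is on the frontier
    have hLsub2 : (L : Set X) ⊆ Wu ∩ closure (ball a ε) := fun y hy =>
      ⟨hLWu y ⟨hy, hLsub hy⟩, hLsub hy⟩
    have hcomp : (L : Set X) ⊆ connectedComponentIn (Wu ∩ closure (ball a ε)) a :=
      hLp.subset_connectedComponentIn haL hLsub2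
    refine ⟨b, hcomp hbL, ?_⟩
    refine ⟨hLsub hbL, ?_⟩
    rw [isOpen_ball.interior_eq]
    intro hmem
    rw [mem_ball, dist_comm] at hmem
    linarith
  · -- boundary bumping on L
    have haF : a ∈ closure (ball a ε) := subset_closure (mem_ball_self hε)
    obtain ⟨z, hz1, hz2⟩ := bump L.isCompact hLp isClosed_closure haL haF hLsub
    refine ⟨z, ?_, frontier_closure_subset_of_isOpen isOpen_ball hz2⟩
    have hmono : (L : Set X) ∩ closure (ball a ε) ⊆ Wu ∩ closure (ball a ε) :=
      fun y hy => ⟨hLWu y hy, hy.2⟩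
    exact connectedComponentIn_mono a hmono hz1
end Aux

/-- (Ma\~n\'e's key lemma) If an expansive homeomorphism acts on a
compact metric space that is not totally disconnected, then there is `ε₀ > 0` such that
for every `ε ∈ (0, ε₀)` some point `a` has its local stable or unstable connected
component `Σ^s_ε(a)` (resp. `Σ^u_ε(a)`) meeting the boundary of the `ε`-ball at `a`. -/
theorem stmt_13 {X : Type*} [MetricSpace X] [CompactSpace X] (f : X ≃ₜ X)
    (hexp : Expansive f) (hX : ¬ TotallyDisconnectedSpace X) :
    ∃ ε₀ > (0 : ℝ), ∀ ε : ℝ, 0 < ε → ε < ε₀ → ∃ a : X,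
      (connectedComponentIn (localStable f ε a ∩ closure (Metric.ball a ε)) a ∩
        frontier (Metric.ball a ε)).Nonempty ∨
      (connectedComponentIn (localUnstable f ε a ∩ closure (Metric.ball a ε)) a ∩
        frontier (Metric.ball a ε)).Nonempty := by
  classical
  obtain ⟨c, hexpc⟩ := hexp
  -- a nondegenerate continuum
  have hS : ∃ S : Set X, IsPreconnected S ∧ ∃ x₀ ∈ S, ∃ y₀ ∈ S, x₀ ≠ y₀ := by
    by_contra hcon
    push_neg at hcon
    apply hX
    constructor
    intro t _ ht
    intro x hxt y hyt
    by_contra hne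
    exact hne (hcon t ht x hxt y hyt)
  obtain ⟨S, hSp, x₀, hx₀, y₀, hy₀, hxy⟩ := hS
  have hCc : IsCompact (closure S) := isClosed_closure.isCompact
  have hCp : IsPreconnected (closure S) := hSp.closure
  have hx₀C : x₀ ∈ closure S := subset_closure hx₀
  have hy₀C : y₀ ∈ closure S := subset_closure hy₀
  refine ⟨c, hexpc.1, ?_⟩
  intro ε hε hεc
  -- certificates in one of the two directions, for all M
  have hor : (∀ M : ℕ, Cert f ε M) ∨ (∀ M : ℕ, Cert f.symm ε M) := by
    by_cases h : ∀ M : ℕ, Cert f ε M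
    · exact Or.inl h
    · push_neg at h
      obtain ⟨M₀, hM₀⟩ := h
      right
      intro M
      rcases cert_or f hexpc hCc hCp hx₀C hy₀C hxy hε hεc (max M M₀) with h' | h'
      · exact absurd (cert_mono h' (le_max_right _ _)) hM₀
      · exact cert_mono h' (le_max_left _ _)
  rcases hor with h | h
  · obtain ⟨a, ha⟩ := limit_step f hε h
    exact ⟨a, Or.inr ha⟩
  · obtain ⟨a, ha⟩ := limit_step f.symm hε h
    refine ⟨a, Or.inl ?_⟩
    have hset : {y | ∀ n : ℕ, dist (iterZ f.symm (-(n : ℤ)) a)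
        (iterZ f.symm (-(n : ℤ)) y) ≤ ε} = localStable f ε a := by
      ext y
      simp only [Set.mem_setOf_eq, localStable, iterZ_symm, neg_neg]
    rwa [hset] at ha
end
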